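/- With M^k_r as above, the cardinality of M^k_r is 2^{k−r} · S(k,r), where S(k,r) is the Stirling number of the second kind. -/

import Mathlib

/-- Membership in the class `M^k_r`. -/
def MkrMem {r k : ℕ} (D : Matrix (Fin r) (Fin k) ℤ) : Prop :=
  (∀ j : Fin k, ∃ i : Fin r, (D i j = 1 ∨ D i j = -1) ∧ ∀ i' : Fin r, i' ≠ i → D i' j = 0) ∧
  (∀ i : Fin r, ∃ j : Fin k, D i j ≠ 0) ∧
  (∃ js : Fin r → Fin k, StrictMono js ∧ (∀ i : Fin r, (i : ℕ) = 0 → (js i : ℕ) = 0) ∧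
    ∀ i : Fin r, D i (js i) = 1 ∧ ∀ j : Fin k, j < js i → D i j = 0)

/-- Stirling numbers of the second kind. -/
def Stir : ℕ → ℕ → ℕ
  | 0, 0 => 1
  | 0, _ + 1 => 0
  | _ + 1, 0 => 0
  | k + 1, r + 1 => (r + 1) * Stir k (r + 1) + Stir k r

namespace CardMkr

def P (k r : ℕ) : Type :=
  {p : (Fin k → Fin r) × (Fin r → Fin k) //
    StrictMono p.2 ∧ ∀ i, p.1 (p.2 i) = i ∧ ∀ j, j < p.2 i → p.1 j ≠ i}

instance (k r : ℕ) : Finite (P k r) := Subtype.finite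

variable {k r : ℕ}

/-- Forward map, case B: last column is a first occurrence. -/
def fwdB (f : Fin (k+1) → Fin (r+1)) (js : Fin (r+1) → Fin (k+1)) (hm : StrictMono js)
    (hc : ∀ i, f (js i) = i ∧ ∀ j, j < js i → f j ≠ i)
    (h : js (Fin.last r) = Fin.last k) : P k r := by
  have hfne : ∀ j : Fin k, f j.castSucc ≠ Fin.last r := fun j =>
    (hc (Fin.last r)).2 j.castSucc (by rw [h]; exact Fin.castSucc_lt_last j)
  have hjlt : ∀ i : Fin r, (js i.castSucc).val < k := fun i => by
    have h2 := hm (Fin.castSucc_lt_last i)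
    rw [h] at h2
    exact Fin.lt_def.mp h2
  refine ⟨(fun j => Fin.castLT (f j.castSucc) (Fin.val_lt_last (hfne j)),
    fun i => Fin.castLT (js i.castSucc) (hjlt i)), fun a b hab => ?_, fun i => ⟨?_, fun j hj => ?_⟩⟩
  · try dsimp only
    have := hm (Fin.castSucc_lt_castSucc_iff.mpr hab)
    rw [Fin.lt_def] at this ⊢
    simpa using this
  · try dsimp only
    have h1 := (hc i.castSucc).1
    apply Fin.ext
    rw [Fin.ext_iff] at h1
    simp only [Fin.coe_castLT, Fin.coe_castSucc] at h1 ⊢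
    rw [show (Fin.castLT (js i.castSucc) (hjlt i)).castSucc = js i.castSucc from
      Fin.castSucc_castLT _ _]
    exact h1
  · try dsimp only
    intro he
    have h3 : j.castSucc < js i.castSucc := by
      rw [Fin.lt_def] at hj ⊢; simpa using hj
    refine (hc i.castSucc).2 j.castSucc h3 ?_
    apply Fin.ext
    rw [Fin.ext_iff] at he
    simpa using he
  

/-- Forward map, case A: last column is a repeat. -/
def fwdA (f : Fin (k+1) → Fin (r+1)) (js : Fin (r+1) → Fin (k+1)) (hm : StrictMono js)
    (hc : ∀ i, f (js i) = i ∧ ∀ j, j < js i → f j ≠ i)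
    (h : js (Fin.last r) ≠ Fin.last k) : P k (r+1) := by
  have hjlt : ∀ i : Fin (r+1), (js i).val < k := fun i => by
    have h1 : js i ≤ js (Fin.last r) := hm.monotone (Fin.le_last i)
    have h2 : js (Fin.last r) < Fin.last k := lt_of_le_of_ne (Fin.le_last _) h
    exact Fin.lt_def.mp (lt_of_le_of_lt h1 h2)
  refine ⟨(fun j => f j.castSucc, fun i => Fin.castLT (js i) (hjlt i)),
    fun a b hab => ?_, fun i => ⟨?_, fun j hj => ?_⟩⟩
  · try dsimp only
    have := hm hab
    rw [Fin.lt_def] at this ⊢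
    simpa using this
  · try dsimp only
    rw [show (Fin.castLT (js i) (hjlt i)).castSucc = js i from Fin.castSucc_castLT _ _]
    exact (hc i).1
  · try dsimp only
    have h3 : j.castSucc < js i := by
      rw [Fin.lt_def] at hj ⊢; simpa using hj
    exact (hc i).2 j.castSucc h3

/-- Backward map, case A. -/
def bwdA (v : Fin (r+1)) (p : P k (r+1)) : P (k+1) (r+1) :=
  ⟨(Fin.snoc p.1.1 v, fun i => (p.1.2 i).castSucc), by
    obtain ⟨⟨f, js⟩, hm, hc⟩ := p
    dsimp only at hm hc ⊢
    refine ⟨fun a b hab => ?_, fun i => ⟨?_, fun j hj => ?_⟩⟩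
    · exact Fin.castSucc_lt_castSucc_iff.mpr (hm hab)
    · rw [Fin.snoc_castSucc]
      exact (hc i).1
    · rcases (Fin.exists_castSucc_eq (i := j)).mpr (Fin.ne_last_of_lt hj) with ⟨j', rfl⟩
      rw [Fin.snoc_castSucc]
      exact (hc i).2 j' (Fin.castSucc_lt_castSucc_iff.mp hj)⟩

/-- Backward map, case B. -/
def bwdB (p : P k r) : P (k+1) (r+1) :=
  ⟨(Fin.snoc (fun j => (p.1.1 j).castSucc) (Fin.last r),
    Fin.snoc (fun i => (p.1.2 i).castSucc) (Fin.last k)), by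
    obtain ⟨⟨f, js⟩, hm, hc⟩ := p
    dsimp only at hm hc ⊢
    refine ⟨fun a b hab => ?_, fun i => ⟨?_, fun j hj => ?_⟩⟩
    · rcases (Fin.exists_castSucc_eq (i := a)).mpr (Fin.ne_last_of_lt hab) with ⟨a', rfl⟩
      rw [Fin.snoc_castSucc]
      rcases eq_or_ne b (Fin.last r) with rfl | hb
      · rw [Fin.snoc_last]
        exact Fin.castSucc_lt_last _
      · rcases Fin.exists_castSucc_eq.mpr hb with ⟨b', rfl⟩
        rw [Fin.snoc_castSucc]
        exact Fin.castSucc_lt_castSucc_iff.mpr (hm (Fin.castSucc_lt_castSucc_iff.mp hab))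
    · rcases eq_or_ne i (Fin.last r) with rfl | hi
      · rw [Fin.snoc_last, Fin.snoc_last]
      · rcases Fin.exists_castSucc_eq.mpr hi with ⟨i', rfl⟩
        rw [Fin.snoc_castSucc, Fin.snoc_castSucc, (hc i').1]
    · rcases eq_or_ne i (Fin.last r) with rfl | hi
      · rw [Fin.snoc_last] at hj
        rcases (Fin.exists_castSucc_eq (i := j)).mpr (Fin.ne_last_of_lt hj) with ⟨j', rfl⟩
        rw [Fin.snoc_castSucc]
        exact Fin.ne_last_of_lt (Fin.castSucc_lt_last _)
      · rcases Fin.exists_castSucc_eq.mpr hi with ⟨i', rfl⟩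
        rw [Fin.snoc_castSucc] at hj
        have hjne : j ≠ Fin.last k :=
          Fin.ne_last_of_lt (lt_of_lt_of_le hj (le_of_lt (Fin.castSucc_lt_last _)))
        rcases Fin.exists_castSucc_eq.mpr hjne with ⟨j', rfl⟩
        rw [Fin.snoc_castSucc]
        intro he
        exact (hc i').2 j' (Fin.castSucc_lt_castSucc_iff.mp hj) (Fin.castSucc_injective _ he)⟩

def fwd (p : P (k+1) (r+1)) : (Fin (r+1) × P k (r+1)) ⊕ P k r :=
  if h : p.1.2 (Fin.last r) = Fin.last k then Sum.inr (fwdB p.1.1 p.1.2 p.2.1 p.2.2 h)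
  else Sum.inl (p.1.1 (Fin.last k), fwdA p.1.1 p.1.2 p.2.1 p.2.2 h)

def bwd (x : (Fin (r+1) × P k (r+1)) ⊕ P k r) : P (k+1) (r+1) :=
  match x with
  | Sum.inl (v, p) => bwdA v p
  | Sum.inr p => bwdB p

lemma bwd_fwd (p : P (k+1) (r+1)) : bwd (fwd p) = p := by
  obtain ⟨⟨f, js⟩, hm, hc⟩ := p
  dsimp only at hm hc
  by_cases h : js (Fin.last r) = Fin.last k
  · unfold fwd
    dsimp only
    rw [dif_pos h]
    rw [bwd, bwdB, fwdB]
    apply Subtype.ext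
    dsimp only
    refine Prod.ext ?_ ?_ <;> dsimp only <;> funext x <;>
      rcases eq_or_ne x (Fin.last _) with rfl | hx
    · rw [Fin.snoc_last, ← h, (hc (Fin.last r)).1]
    · rcases Fin.exists_castSucc_eq.mpr hx with ⟨x', rfl⟩
      rw [Fin.snoc_castSucc, Fin.castSucc_castLT]
    · rw [Fin.snoc_last, h]
    · rcases Fin.exists_castSucc_eq.mpr hx with ⟨x', rfl⟩
      rw [Fin.snoc_castSucc, Fin.castSucc_castLT]
  · unfold fwd
    dsimp only
    rw [dif_neg h]
    rw [bwd, bwdA, fwdA]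
    apply Subtype.ext
    dsimp only
    refine Prod.ext ?_ ?_ <;> dsimp only <;> funext x
    · rcases eq_or_ne x (Fin.last _) with rfl | hx
      · rw [Fin.snoc_last]
      · rcases Fin.exists_castSucc_eq.mpr hx with ⟨x', rfl⟩
        rw [Fin.snoc_castSucc]
    · rw [Fin.castSucc_castLT]

lemma fwd_bwd (x : (Fin (r+1) × P k (r+1)) ⊕ P k r) : fwd (bwd x) = x := by
  rcases x with ⟨v, ⟨⟨f, js⟩, hm, hc⟩⟩ | ⟨⟨f, js⟩, hm, hc⟩
  · unfold bwd bwdA fwd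
    dsimp only
    have hne : (js (Fin.last r)).castSucc ≠ Fin.last k :=
      Fin.ne_last_of_lt (Fin.castSucc_lt_last _)
    rw [dif_neg hne]
    congr 1
    refine Prod.ext ?_ ?_
    · dsimp only
      rw [Fin.snoc_last]
    · rw [fwdA]
      apply Subtype.ext
      dsimp only
      refine Prod.ext ?_ ?_ <;> dsimp only <;> funext x
      · rw [Fin.snoc_castSucc]
      · apply Fin.ext
        simp
  · unfold bwd bwdB fwd
    dsimp only
    rw [dif_pos (Fin.snoc_last _ _)]
    congr 1
    rw [fwdB]
    apply Subtype.ext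
    dsimp only
    refine Prod.ext ?_ ?_ <;> dsimp only <;> funext x <;> apply Fin.ext <;>
      simp [Fin.snoc_castSucc]

def stepEquiv (k r : ℕ) : P (k+1) (r+1) ≃ (Fin (r+1) × P k (r+1)) ⊕ P k r :=
  ⟨fwd, bwd, bwd_fwd, fwd_bwd⟩

lemma cardP : ∀ k r, Nat.card (P k r) = Stir k r := by
  intro k
  induction k with
  | zero =>
    intro r
    match r with
    | 0 =>
      haveI : Nonempty (P 0 0) :=
        ⟨⟨(fun j => j.elim0, fun i => i.elim0), fun a => a.elim0, fun i => i.elim0⟩⟩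
      haveI : Subsingleton (P 0 0) := ⟨fun a b => by
        apply Subtype.ext
        refine Prod.ext ?_ ?_ <;> funext x <;> exact x.elim0⟩
      rw [Nat.card_unique, Stir]
    | r + 1 =>
      haveI : IsEmpty (P 0 (r+1)) := ⟨fun p => (p.1.2 0).elim0⟩
      rw [Nat.card_of_isEmpty, Stir]
  | succ k ih =>
    intro r
    match r with
    | 0 =>
      haveI : IsEmpty (P (k+1) 0) := ⟨fun p => (p.1.1 0).elim0⟩
      rw [Nat.card_of_isEmpty, Stir]
    | r + 1 =>
      rw [Nat.card_congr (stepEquiv k r), Nat.card_sum, Nat.card_prod, ih, ih, Stir]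
      simp [Nat.card_eq_fintype_card]


def Sgn {k r : ℕ} (p : P k r) : Type := {s : Fin k → Bool // ∀ i : Fin r, s (p.1.2 i) = true}

instance {k r : ℕ} (p : P k r) : Finite (Sgn p) := Subtype.finite

def toMatrix {k r : ℕ} (p : P k r) (s : Fin k → Bool) : Matrix (Fin r) (Fin k) ℤ :=
  fun i j => if p.1.1 j = i then (if s j then 1 else -1) else 0

lemma toMatrix_apply {k r : ℕ} (p : P k r) (s : Fin k → Bool) (i : Fin r) (j : Fin k) :
    toMatrix p s i j = if p.1.1 j = i then (if s j then 1 else -1) else 0 := rfl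

lemma mem_toMatrix {k r : ℕ} (p : P k r) (s : Sgn p) : MkrMem (toMatrix p s.1) := by
  obtain ⟨⟨f, js⟩, hm, hc⟩ := p
  obtain ⟨s, hs⟩ := s
  dsimp only at hm hc hs
  refine ⟨fun j => ⟨f j, ?_, fun i' hi' => ?_⟩, fun i => ⟨js i, ?_⟩,
    js, hm, ?_, fun i => ⟨?_, fun j hj => ?_⟩⟩
  · unfold toMatrix
    rw [if_pos rfl]
    dsimp only
    rcases Bool.eq_false_or_eq_true (s j) with hb | hb <;> simp [hb]
  · simp only [toMatrix]
    rw [if_neg (fun he => hi' he.symm)]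
  · unfold toMatrix
    rw [if_pos (hc i).1]
    dsimp only
    rcases Bool.eq_false_or_eq_true (s (js i)) with hb | hb <;> simp [hb]
  · intro i hi
    have hk : 0 < k := (js i).pos
    have h0 : js (f ⟨0, hk⟩) = ⟨0, hk⟩ := by
      have h1 : ¬ (⟨0, hk⟩ : Fin k) < js (f ⟨0, hk⟩) :=
        fun hlt => (hc (f ⟨0, hk⟩)).2 ⟨0, hk⟩ hlt rfl
      refine le_antisymm (not_lt.mp h1) ?_
      simp [Fin.le_def]
    have hle : i ≤ f ⟨0, hk⟩ := by
      rw [Fin.le_def, hi]; exact Nat.zero_le _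
    have := hm.monotone hle
    rw [h0] at this
    have h9 := Fin.le_def.mp this
    simp at h9
    omega
  · unfold toMatrix
    rw [if_pos (hc i).1]
    show (if s (js i) = true then (1:ℤ) else -1) = 1
    rw [hs i]
    simp
  · simp only [toMatrix]
    rw [if_neg ((hc i).2 j hj)]

def bwdM {k r : ℕ} (x : Σ p : P k r, Sgn p) : {D : Matrix (Fin r) (Fin k) ℤ // MkrMem D} :=
  ⟨toMatrix x.1 x.2.1, mem_toMatrix x.1 x.2⟩

lemma bwdM_bijective (k r : ℕ) : Function.Bijective (bwdM (k := k) (r := r)) := by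
  constructor
  · rintro ⟨p1, s1, hs1⟩ ⟨p2, s2, hs2⟩ h
    have hD : toMatrix p1 s1 = toMatrix p2 s2 := congrArg Subtype.val h
    have hDij : ∀ i j, toMatrix p1 s1 i j = toMatrix p2 s2 i j := fun i j => by rw [hD]
    have hf : p1.1.1 = p2.1.1 := by
      funext j
      by_contra hne
      have h1 := hDij (p1.1.1 j) j
      rw [toMatrix_apply, toMatrix_apply, if_pos rfl,
        if_neg (c := (Subtype.val p2).1 j = (Subtype.val p1).1 j) (fun he => hne he.symm)] at h1
      rcases Bool.eq_false_or_eq_true (s1 j) with hb | hb <;> rw [hb] at h1 <;> simp at h1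
    have key : ∀ (q1 q2 : P k r), q1.1.1 = q2.1.1 → ∀ i, ¬ q1.1.2 i < q2.1.2 i := by
      intro q1 q2 hff i hlt
      have ha : q1.1.1 (q1.1.2 i) = i := (q1.2.2 i).1
      have hb := (q2.2.2 i).2 (q1.1.2 i) hlt
      rw [← hff] at hb
      exact hb ha
    have hjs : p1.1.2 = p2.1.2 := by
      funext i
      exact le_antisymm (not_lt.mp (key p2 p1 hf.symm i)) (not_lt.mp (key p1 p2 hf i))
    have hp : p1 = p2 := Subtype.ext (Prod.ext hf hjs)
    subst hp
    have hs : s1 = s2 := by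
      funext j
      have h1 := hDij (p1.1.1 j) j
      rw [toMatrix_apply, toMatrix_apply, if_pos rfl, if_pos rfl] at h1
      rcases Bool.eq_false_or_eq_true (s1 j) with hb1 | hb1 <;>
        rcases Bool.eq_false_or_eq_true (s2 j) with hb2 | hb2 <;>
        rw [hb1, hb2] at h1 <;> rw [hb1, hb2] <;> norm_num at h1
    subst hs
    rfl
  · rintro ⟨D, hD⟩
    have h1 := hD.1
    choose f hfa hfb using h1
    obtain ⟨js, hm, hz, hjs⟩ := hD.2.2
    have hfu : ∀ j i, D i j ≠ 0 → f j = i := by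
      intro j i hDij
      by_contra hne
      exact hDij (hfb j i (fun he => hne he.symm))
    have hfi : ∀ i, f (js i) = i := fun i => hfu (js i) i (by rw [(hjs i).1]; norm_num)
    refine ⟨⟨⟨(f, js), hm, fun i => ⟨hfi i, fun j hj hfj => ?_⟩⟩,
      ⟨fun j => decide (D (f j) j = 1), fun i => ?_⟩⟩, ?_⟩
    · dsimp only at hfj hj
      have h0 : D i j = 0 := (hjs i).2 j hj
      rcases hfa j with hv | hv <;> rw [hfj, h0] at hv <;> norm_num at hv
    · dsimp only
      rw [hfi i, (hjs i).1]
      simp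
    · apply Subtype.ext
      funext i j
      show toMatrix _ _ i j = D i j
      rw [toMatrix_apply]
      dsimp only
      by_cases hij : f j = i
      · rw [if_pos hij, ← hij]
        rcases hfa j with hv | hv <;> simp [hv]
      · rw [if_neg hij]
        exact (hfb j i (fun he => hij he.symm)).symm

lemma cardSgn {k r : ℕ} (p : P k r) : Nat.card (Sgn p) = 2 ^ (k - r) := by
  classical
  have hinj : Function.Injective p.1.2 := p.2.1.injective
  let e : Sgn p ≃ ({j : Fin k // j ∉ Set.range p.1.2} → Bool) :=
    { toFun := fun s => fun j => s.1 j.1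
      invFun := fun g => ⟨fun j => if h : j ∈ Set.range p.1.2 then true else g ⟨j, h⟩,
        fun i => dif_pos ⟨i, rfl⟩⟩
      left_inv := fun s => by
        apply Subtype.ext
        funext j
        dsimp only
        by_cases h : j ∈ Set.range p.1.2
        · rw [dif_pos h]
          obtain ⟨i, rfl⟩ := h
          exact (s.2 i).symm
        · rw [dif_neg h]
      right_inv := fun g => by
        funext j
        exact dif_neg j.2 }
  have hc1 : Nat.card {j : Fin k // j ∈ Set.range p.1.2} = r := by
    have h := Nat.card_range_of_injective hinj
    rw [show Nat.card (Fin r) = r by simp] at h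
    exact h
  have hc2 := Nat.card_congr (Equiv.sumCompl (fun j : Fin k => j ∈ Set.range p.1.2))
  rw [Nat.card_sum, hc1, show Nat.card (Fin k) = k by simp] at hc2
  rw [Nat.card_congr e, Nat.card_fun]
  rw [show Nat.card Bool = 2 by simp]
  congr 1
  omega

theorem card_Mkr' (r k : ℕ) :
    Nat.card {D : Matrix (Fin r) (Fin k) ℤ // MkrMem D} = 2 ^ (k - r) * Stir k r := by
  classical
  rw [Nat.card_congr (Equiv.ofBijective _ (bwdM_bijective k r)).symm]
  haveI : Fintype (P k r) := Fintype.ofFinite _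
  haveI : ∀ p : P k r, Fintype (Sgn p) := fun p => Fintype.ofFinite _
  rw [Nat.card_eq_fintype_card, Fintype.card_sigma]
  have hS : ∀ p : P k r, Fintype.card (Sgn p) = 2 ^ (k - r) := fun p => by
    rw [← Nat.card_eq_fintype_card, cardSgn]
  rw [Finset.sum_congr rfl (fun p _ => hS p), Finset.sum_const, smul_eq_mul,
    Finset.card_univ, ← Nat.card_eq_fintype_card, cardP]
  ring

end CardMkr


/-- #M^k_r = 2^(k-r) · S(k,r). -/
theorem card_Mkr (r k : ℕ) (hr : 1 ≤ r) (hrk : r ≤ k) :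
    Nat.card {D : Matrix (Fin r) (Fin k) ℤ // MkrMem D} = 2 ^ (k - r) * Stir k r :=
  CardMkr.card_Mkr' r k
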